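/- Fix an integer d ≥ 0. An irreducible representation of Sp(2) with highest weight (a,b) (a ≥ b ≥ 0 integers) contains the Sp(1)×Sp(1)-representation (d)⊗(0) upon restriction if and only if (a,b) = (d+k, k) for some integer k ≥ 0, and in that case the multiplicity is exactly 1. -/

import Mathlib

/-
STATEMENT 6: Fix an integer d ≥ 0.  An irreducible representation of Sp(2)
with highest weight (a,b) (a ≥ b ≥ 0) contains the Sp(1)×Sp(1)-representation
(d)⊗(0) upon restriction if and only if (a,b) = (d+k,k) for some k ≥ 0, and in
that case the multiplicity is exactly 1.
Formalization: the restriction to Sp(1)×Sp(1) is encoded by its multiplicity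
function M (M y c = multiplicity of (y)⊗(c)), characterized by the character
identity on the common maximal torus, with the Sp(2)-character given by the
Weyl character formula for C₂ in cross-multiplied (denominator-free) form.
The conclusion is that M d 0 ≠ 0 iff (a,b) = (d+k,k) for some k, and then
M d 0 = 1.
-/

noncomputable section

/-- The character of the irreducible SU(2)-module (m): Σ t^{m−2i}. -/
def sc (m : ℕ) (t : ℂˣ) : ℂ :=
  ∑ i ∈ Finset.range (m+1), ((t ^ ((m:ℤ) - 2*i) : ℂˣ) : ℂ)

/-- t^μ − t^{−μ}. -/
def Aexp (t : ℂˣ) (μ : ℤ) : ℂ := ((t ^ μ : ℂˣ) : ℂ) - ((t ^ (-μ) : ℂˣ) : ℂ)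

/-- The Weyl character formula numerator for the Sp(2)-representation of
highest weight (a,b): λ+ρ = (a+2, b+1). -/
def NumC2 (x1 x2 : ℕ) (t1 t2 : ℂˣ) : ℂ :=
  Aexp t1 ((x1:ℤ)+2) * Aexp t2 ((x2:ℤ)+1) - Aexp t1 ((x2:ℤ)+1) * Aexp t2 ((x1:ℤ)+2)

open Finset

lemma aexp_eq (t : ℂˣ) (μ : ℤ) : Aexp t μ = (t:ℂ)^μ - (t:ℂ)^(-μ) := by
  simp [Aexp, Units.val_zpow_eq_zpow_val]

lemma sc_eq (m : ℕ) (t : ℂˣ) : sc m t = ∑ i ∈ range (m+1), (t:ℂ)^((m:ℤ) - 2*i) := by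
  simp [sc, Units.val_zpow_eq_zpow_val]

lemma aexp_zero (t : ℂˣ) : Aexp t 0 = 0 := by simp [aexp_eq]

def uu (t : ℂˣ) : ℂ := (t:ℂ) + (t:ℂ)⁻¹

lemma u_mul_aexp (t : ℂˣ) (μ : ℤ) : uu t * Aexp t μ = Aexp t (μ+1) + Aexp t (μ-1) := by
  have hz : (t:ℂ) ≠ 0 := t.ne_zero
  rw [aexp_eq, aexp_eq, aexp_eq, uu]
  have h1 : ∀ ν:ℤ, (t:ℂ)^(ν+1) = (t:ℂ)^ν * (t:ℂ) := fun ν => zpow_add_one₀ hz ν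
  have h2 : ∀ ν:ℤ, (t:ℂ)^(ν-1) = (t:ℂ)^ν * (t:ℂ)⁻¹ := fun ν => zpow_sub_one₀ hz ν
  have e1 : -(μ+1) = -μ - 1 := by ring
  have e2 : -(μ-1) = -μ + 1 := by ring
  rw [e1, e2, h1, h2, h1, h2]
  ring

lemma aexp_two (t : ℂˣ) : Aexp t 2 = uu t * Aexp t 1 := by
  rw [u_mul_aexp]
  norm_num [aexp_zero]

lemma sc_zero (t : ℂˣ) : sc 0 t = 1 := by simp [sc_eq]

lemma sc_one (t : ℂˣ) : sc 1 t = uu t := by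
  have hz : (t:ℂ) ≠ 0 := t.ne_zero
  rw [sc_eq, uu]
  rw [Finset.sum_range_succ, Finset.sum_range_one]
  norm_num [zpow_neg_one]

lemma sc_rec (t : ℂˣ) (n : ℕ) : uu t * sc (n+1) t = sc (n+2) t + sc n t := by
  have hz : (t:ℂ) ≠ 0 := t.ne_zero
  rw [sc_eq, sc_eq, sc_eq, uu, Finset.mul_sum]
  push_cast
  have key : ∀ i ∈ range (n+2),
      ((t:ℂ) + (t:ℂ)⁻¹) * (t:ℂ)^(((n:ℤ)+1) - 2*i)
        = (t:ℂ)^(((n:ℤ)+2) - 2*i) + (t:ℂ)^((n:ℤ) - 2*i) := by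
    intro i _
    have h1 : ((n:ℤ)+2) - 2*i = (((n:ℤ)+1) - 2*i) + 1 := by ring
    have h2 : (n:ℤ) - 2*i = (((n:ℤ)+1) - 2*i) - 1 := by ring
    rw [h1, h2, zpow_add_one₀ hz, zpow_sub_one₀ hz]
    ring
  rw [Finset.sum_congr rfl key, Finset.sum_add_distrib]
  -- Σ_{i<n+2} z^{n+2-2i} = sc(n+2) - z^{-(n+2)} ;  Σ_{i<n+2} z^{n-2i} = sc n + z^{-(n+2)}
  have e1 : ∑ i ∈ range (n+3), (t:ℂ)^(((n:ℤ)+2) - 2*i)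
      = (∑ i ∈ range (n+2), (t:ℂ)^(((n:ℤ)+2) - 2*i)) + (t:ℂ)^(((n:ℤ)+2) - 2*((n:ℤ)+2)) := by
    rw [Finset.sum_range_succ]; congr 2
  have e2 : ∑ i ∈ range (n+2), (t:ℂ)^((n:ℤ) - 2*i)
      = (∑ i ∈ range (n+1), (t:ℂ)^((n:ℤ) - 2*i)) + (t:ℂ)^((n:ℤ) - 2*((n:ℤ)+1)) := by
    rw [Finset.sum_range_succ]; congr 2
  have e3 : ((n:ℤ)+2) - 2*((n:ℤ)+2) = (n:ℤ) - 2*((n:ℤ)+1) := by ring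
  rw [e1, e2, e3]
  ring

lemma sc_mul_aexp_one (c : ℕ) (t : ℂˣ) : sc c t * Aexp t 1 = Aexp t ((c:ℤ)+1) := by
  have hz : (t:ℂ) ≠ 0 := t.ne_zero
  rw [sc_eq, aexp_eq, aexp_eq, Finset.sum_mul]
  have key : ∀ i ∈ range (c+1),
      (t:ℂ)^((c:ℤ) - 2*i) * ((t:ℂ)^(1:ℤ) - (t:ℂ)^(-1:ℤ))
        = (fun j : ℕ => (t:ℂ)^(((c:ℤ)+1) - 2*j)) i - (fun j : ℕ => (t:ℂ)^(((c:ℤ)+1) - 2*j)) (i+1) := by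
    intro i _
    simp only
    have h1 : ((c:ℤ)+1) - 2*i = ((c:ℤ) - 2*i) + 1 := by ring
    have h2 : ((c:ℤ)+1) - 2*(i+1:ℕ) = ((c:ℤ) - 2*i) - 1 := by push_cast; ring
    rw [h1, h2, zpow_add_one₀ hz, zpow_sub_one₀ hz, zpow_one, zpow_neg_one]
    ring
  rw [Finset.sum_congr rfl key, Finset.sum_range_sub']
  show (t:ℂ)^(((c:ℤ)+1) - 2*((0:ℕ):ℤ)) - (t:ℂ)^(((c:ℤ)+1) - 2*(((c+1:ℕ)):ℤ)) = _
  have h0 : ((c:ℤ)+1) - 2*((0:ℕ):ℤ) = (c:ℤ)+1 := by push_cast; ring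
  have h3 : ((c:ℤ)+1) - 2*(((c+1:ℕ)):ℤ) = -((c:ℤ)+1) := by push_cast; ring
  rw [h0, h3]

lemma aexp_mul_sc (t : ℂˣ) (q : ℤ) (p : ℕ) :
    Aexp t q * sc p t = ∑ i ∈ range (p+1), Aexp t (q + p - 2*i) := by
  rw [sc_eq, Finset.mul_sum]
  have key : ∀ i ∈ range (p+1),
      Aexp t q * (t:ℂ)^((p:ℤ) - 2*i)
        = (t:ℂ)^(q + p - 2*i) - (t:ℂ)^(-q + p - 2*i) := by
    intro i _
    rw [aexp_eq, sub_mul, ← zpow_add₀ t.ne_zero, ← zpow_add₀ t.ne_zero]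
    congr 2 <;> ring
  rw [Finset.sum_congr rfl key, Finset.sum_sub_distrib]
  have key2 : ∀ i ∈ range (p+1), Aexp t (q + p - 2*i)
      = (t:ℂ)^(q + p - 2*i) - (t:ℂ)^(-(q + p) + 2*i) := by
    intro i _
    rw [aexp_eq]; congr 2; ring
  rw [Finset.sum_congr rfl key2, Finset.sum_sub_distrib]
  congr 1
  rw [← Finset.sum_range_reflect (fun i => (t:ℂ)^(-(q + (p:ℤ)) + 2*i)) (p+1)]
  apply Finset.sum_congr rfl
  intro i hi
  simp only [Finset.mem_range] at hi
  congr 1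
  have : ((p + 1 - 1 - i : ℕ) : ℤ) = (p:ℤ) - i := by omega
  rw [this]; ring

lemma tel (t : ℂˣ) (h : ℕ) :
    ∑ j ∈ range (h+1), Aexp t ((h:ℤ)+1 - 2*j) = Aexp t ((h:ℤ)+1) := by
  have key : ∀ j ∈ range (h+1), Aexp t ((h:ℤ)+1 - 2*j)
      = (t:ℂ)^((h:ℤ)+1 - 2*j) - (t:ℂ)^(-((h:ℤ)+1) + 2*j) := by
    intro j _; rw [aexp_eq]; congr 2; ring
  rw [Finset.sum_congr rfl key, Finset.sum_sub_distrib]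
  rw [← Finset.sum_range_reflect (fun j => (t:ℂ)^(-((h:ℤ)+1) + 2*j)) (h+1)]
  have key2 : ∀ j ∈ range (h+1),
      (fun j : ℕ => (t:ℂ)^(-((h:ℤ)+1) + 2*(h + 1 - 1 - j : ℕ))) j
        = (fun i : ℕ => (t:ℂ)^((h:ℤ)+1 - 2*i)) (j+1) := by
    intro j hj
    simp only [Finset.mem_range] at hj
    simp only
    congr 1
    have : ((h + 1 - 1 - j : ℕ) : ℤ) = (h:ℤ) - j := by omega
    rw [this]; push_cast; ring
  rw [Finset.sum_congr rfl key2, ← Finset.sum_sub_distrib, Finset.sum_range_sub']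
  simp only [aexp_eq]
  congr 2
  push_cast; ring
open Polynomial in
lemma indep (N : ℕ) (c : ℕ → ℂ)
    (h : ∀ t : ℂˣ, ∑ m ∈ range N, c m * Aexp t ((m:ℤ)+1) = 0) :
    ∀ m, m < N → c m = 0 := by
  set p : ℂ[X] := ∑ m ∈ range N, Polynomial.C (c m) * (X^(N+m+1) - X^(N-m-1)) with hp
  have hzero : p = 0 := by
    apply Polynomial.eq_zero_of_infinite_isRoot
    apply Set.Infinite.mono (s := {x : ℂ | x ≠ 0})
    · intro z hz
      simp only [Set.mem_setOf_eq] at hz ⊢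
      have hu : IsUnit z := isUnit_iff_ne_zero.mpr hz
      obtain ⟨t, ht⟩ := hu
      have key : ∀ m ∈ range N, Polynomial.eval z (Polynomial.C (c m) * (X^(N+m+1) - X^(N-m-1)))
          = z^N * (c m * Aexp t ((m:ℤ)+1)) := by
        intro m hm
        simp only [Finset.mem_range] at hm
        simp only [Polynomial.eval_mul, Polynomial.eval_C, Polynomial.eval_sub,
          Polynomial.eval_pow, Polynomial.eval_X]
        have e1 : z^(N+m+1) = z^N * (t:ℂ)^((m:ℤ)+1) := by
          rw [← ht, ← zpow_natCast (t:ℂ) (N+m+1), ← zpow_natCast (t:ℂ) N,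
            ← zpow_add₀ t.ne_zero]
          congr 1 <;> push_cast <;> omega
        have e2 : z^(N-m-1) = z^N * (t:ℂ)^(-((m:ℤ)+1)) := by
          rw [← ht, ← zpow_natCast (t:ℂ) (N-m-1), ← zpow_natCast (t:ℂ) N,
            ← zpow_add₀ t.ne_zero]
          congr 1 <;> push_cast <;> omega
        rw [aexp_eq, e1, e2]; ring
      unfold p
      rw [Polynomial.IsRoot, Polynomial.eval_finset_sum, Finset.sum_congr rfl key,
        ← Finset.mul_sum, h t, mul_zero]
    · apply Set.Finite.infinite_compl (Set.finite_singleton (0:ℂ)) |>.mono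
      intro z hz
      simpa using hz
  intro m hm
  have hc : p.coeff (N+m+1) = c m := by
    unfold p
    rw [Polynomial.finset_sum_coeff]
    rw [Finset.sum_eq_single m]
    · rw [Polynomial.coeff_C_mul, Polynomial.coeff_sub, Polynomial.coeff_X_pow,
        Polynomial.coeff_X_pow]
      rw [if_pos rfl, if_neg (by omega)]
      ring
    · intro m' hm' hne
      simp only [Finset.mem_range] at hm'
      rw [Polynomial.coeff_C_mul, Polynomial.coeff_sub, Polynomial.coeff_X_pow,
        Polynomial.coeff_X_pow]
      rw [if_neg (by omega), if_neg (by omega)]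
      ring
    · intro hmem
      exact absurd (Finset.mem_range.mpr hm) hmem
  rw [hzero] at hc
  simpa using hc.symm
lemma NumC2_mul_sc (t1 t2 : ℂˣ) (c : ℕ) :
    NumC2 0 0 t1 t2 * sc c t2
      = Aexp t1 2 * Aexp t2 ((c:ℤ)+1)
        - Aexp t1 1 * Aexp t2 ((c:ℤ)+2) - Aexp t1 1 * Aexp t2 (c:ℤ) := by
  have h1 : NumC2 0 0 t1 t2 = Aexp t1 2 * Aexp t2 1 - Aexp t1 1 * Aexp t2 2 := by
    unfold NumC2; norm_num
  have e1 : Aexp t2 1 * sc c t2 = Aexp t2 ((c:ℤ)+1) := by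
    rw [mul_comm]; exact sc_mul_aexp_one c t2
  have e2 : Aexp t2 2 * sc c t2 = Aexp t2 ((c:ℤ)+2) + Aexp t2 (c:ℤ) := by
    rw [aexp_two, mul_assoc, e1, u_mul_aexp]
    congr 2 <;> ring
  rw [h1, sub_mul, mul_assoc, mul_assoc, e1, e2]; ring

lemma NumC2_expand (a b : ℕ) (t1 t2 : ℂˣ) :
    NumC2 a b t1 t2 = Aexp t1 ((a:ℤ)+2) * Aexp t2 ((b:ℤ)+1)
      - Aexp t1 ((b:ℤ)+1) * Aexp t2 ((a:ℤ)+2) := rfl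

lemma fin_id (t : ℂˣ) (a b : ℕ) (hb : 1 ≤ b) (hba : b ≤ a) :
    sc a t * Aexp t ((b:ℤ)+1) - sc (b-1) t * Aexp t ((a:ℤ)+2) = Aexp t ((a:ℤ)-b+1) := by
  have h1 : sc a t * Aexp t ((b:ℤ)+1)
      = ∑ i ∈ range (a+1), Aexp t ((a:ℤ)+b+1-2*i) := by
    rw [mul_comm, aexp_mul_sc]
    apply Finset.sum_congr rfl
    intro i _; congr 1; ring
  have h2 : sc (b-1) t * Aexp t ((a:ℤ)+2)
      = ∑ i ∈ range b, Aexp t ((a:ℤ)+b+1-2*i) := by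
    rw [mul_comm, aexp_mul_sc]
    have hb1 : b - 1 + 1 = b := by omega
    rw [hb1]
    apply Finset.sum_congr rfl
    intro i _; congr 1
    have : ((b-1:ℕ):ℤ) = (b:ℤ)-1 := by omega
    rw [this]; ring
  rw [h1, h2]
  rw [Finset.range_eq_Ico,
    ← Finset.sum_Ico_consecutive _ (Nat.zero_le b) (by omega : b ≤ a+1)]
  rw [← Finset.range_eq_Ico, add_sub_cancel_left]
  rw [Finset.sum_Ico_eq_sum_range]
  have hab : a + 1 - b = (a-b) + 1 := by omega
  rw [hab]
  have key : ∀ j ∈ range ((a-b)+1),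
      Aexp t ((a:ℤ)+b+1-2*(b+j:ℕ)) = Aexp t (((a-b:ℕ):ℤ)+1-2*j) := by
    intro j _; congr 1
    have h3 : ((b+j:ℕ):ℤ) = (b:ℤ)+j := by push_cast; ring
    have h4 : ((a-b:ℕ):ℤ) = (a:ℤ)-b := by omega
    rw [h3, h4]; ring
  rw [Finset.sum_congr rfl key, tel]
  congr 1
  omega

lemma main_aux (a b K : ℕ) (hba : b ≤ a) (hK : a + 3 ≤ K) (γ : ℕ → ℂˣ → ℂ)
    (hγ0 : ∀ c, K ≤ c → ∀ t1, γ c t1 = 0)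
    (hid : ∀ t1 t2 : ℂˣ, NumC2 a b t1 t2
      = NumC2 0 0 t1 t2 * ∑ c ∈ range K, γ c t1 * sc c t2) :
    ∀ t1, Aexp t1 1 * γ 0 t1 = Aexp t1 ((a:ℤ) - b + 1) := by
  intro t1
  set γh : ℤ → ℂ := fun z => if 0 ≤ z then γ z.toNat t1 else 0 with hγh
  have hγnat : ∀ c : ℕ, γh (c:ℤ) = γ c t1 := by
    intro c; simp [hγh]
  have hγge : ∀ z : ℤ, (K:ℤ) ≤ z → γh z = 0 := by
    intro z hz
    by_cases h0 : 0 ≤ z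
    · simp only [hγh, if_pos h0]
      exact hγ0 _ (by omega) t1
    · simp [hγh, h0]
  have hγneg : ∀ z : ℤ, z < 0 → γh z = 0 := by
    intro z hz; simp [hγh, not_le.mpr hz]
  set E : ℤ → ℂ := fun z => Aexp t1 2 * γh (z-1) - Aexp t1 1 * γh (z-2) - Aexp t1 1 * γh z
      - (if z = (b:ℤ)+1 then Aexp t1 ((a:ℤ)+2) else 0)
      + (if z = (a:ℤ)+2 then Aexp t1 ((b:ℤ)+1) else 0) with hE
  have hS : ∀ t2 : ℂˣ, ∑ m ∈ range (K+2), E ((m:ℤ)+1) * Aexp t2 ((m:ℤ)+1) = 0 := by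
    intro t2
    have hid' : NumC2 a b t1 t2 = ∑ c ∈ range K, γ c t1 *
        (Aexp t1 2 * Aexp t2 ((c:ℤ)+1) - Aexp t1 1 * Aexp t2 ((c:ℤ)+2)
          - Aexp t1 1 * Aexp t2 (c:ℤ)) := by
      rw [hid t1 t2, mul_comm, Finset.sum_mul]
      apply Finset.sum_congr rfl
      intro c _
      rw [mul_assoc, mul_comm (sc c t2), NumC2_mul_sc]
    have split : ∀ m ∈ range (K+2), E ((m:ℤ)+1) * Aexp t2 ((m:ℤ)+1)
        = Aexp t1 2 * γh m * Aexp t2 ((m:ℤ)+1)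
          - Aexp t1 1 * γh ((m:ℤ)-1) * Aexp t2 ((m:ℤ)+1)
          - Aexp t1 1 * γh ((m:ℤ)+1) * Aexp t2 ((m:ℤ)+1)
          - (if (m:ℤ)+1 = (b:ℤ)+1 then Aexp t1 ((a:ℤ)+2) else 0) * Aexp t2 ((m:ℤ)+1)
          + (if (m:ℤ)+1 = (a:ℤ)+2 then Aexp t1 ((b:ℤ)+1) else 0) * Aexp t2 ((m:ℤ)+1) := by
      intro m _
      simp only [hE]
      have e1 : (m:ℤ)+1-1 = (m:ℤ) := by ring
      have e2 : (m:ℤ)+1-2 = (m:ℤ)-1 := by ring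
      rw [e1, e2]
      ring
    rw [Finset.sum_congr rfl split]
    rw [Finset.sum_add_distrib, Finset.sum_sub_distrib, Finset.sum_sub_distrib,
      Finset.sum_sub_distrib]
    have cS1 : ∑ m ∈ range (K+2), Aexp t1 2 * γh m * Aexp t2 ((m:ℤ)+1)
        = ∑ c ∈ range K, γ c t1 * (Aexp t1 2 * Aexp t2 ((c:ℤ)+1)) := by
      rw [← Finset.sum_subset (Finset.range_subset_range.mpr (show K ≤ K+2 by omega))
        (fun x hx hnx => by
          have hxK : K ≤ x := by simpa [Finset.mem_range, Nat.not_lt] using hnx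
          rw [hγge (x:ℤ) (by exact_mod_cast Nat.cast_le.mpr hxK)]
          ring)]
      apply Finset.sum_congr rfl
      intro c _
      rw [hγnat]; ring
    have cS2 : ∑ m ∈ range (K+2), Aexp t1 1 * γh ((m:ℤ)-1) * Aexp t2 ((m:ℤ)+1)
        = ∑ c ∈ range K, γ c t1 * (Aexp t1 1 * Aexp t2 ((c:ℤ)+2)) := by
      rw [Finset.sum_range_succ' (fun m => Aexp t1 1 * γh ((m:ℤ)-1) * Aexp t2 ((m:ℤ)+1)) (K+1)]
      have hz0 : Aexp t1 1 * γh (((0:ℕ):ℤ)-1) * Aexp t2 (((0:ℕ):ℤ)+1) = 0 := by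
        rw [hγneg (((0:ℕ):ℤ)-1) (by norm_num)]; ring
      rw [hz0, add_zero]
      have step : ∀ m ∈ range (K+1),
          Aexp t1 1 * γh (((m+1:ℕ):ℤ)-1) * Aexp t2 (((m+1:ℕ):ℤ)+1)
            = Aexp t1 1 * γh (m:ℤ) * Aexp t2 ((m:ℤ)+2) := by
        intro m _
        have e1 : ((m+1:ℕ):ℤ)-1 = (m:ℤ) := by push_cast; ring
        have e2 : ((m+1:ℕ):ℤ)+1 = (m:ℤ)+2 := by push_cast; ring
        rw [e1, e2]
      rw [Finset.sum_congr rfl step]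
      rw [← Finset.sum_subset (Finset.range_subset_range.mpr (show K ≤ K+1 by omega))
        (fun x hx hnx => by
          have hxK : K ≤ x := by simpa [Finset.mem_range, Nat.not_lt] using hnx
          rw [hγge (x:ℤ) (by exact_mod_cast Nat.cast_le.mpr hxK)]
          ring)]
      apply Finset.sum_congr rfl
      intro c _
      rw [hγnat]; ring
    have cS3 : ∑ m ∈ range (K+2), Aexp t1 1 * γh ((m:ℤ)+1) * Aexp t2 ((m:ℤ)+1)
        = ∑ c ∈ range K, γ c t1 * (Aexp t1 1 * Aexp t2 (c:ℤ)) := by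
      obtain ⟨K', rfl⟩ : ∃ K', K = K' + 1 := ⟨K - 1, by omega⟩
      rw [Finset.sum_range_succ' (fun c => γ c t1 * (Aexp t1 1 * Aexp t2 (c:ℤ))) K']
      have hz0 : γ 0 t1 * (Aexp t1 1 * Aexp t2 ((0:ℕ):ℤ)) = 0 := by
        norm_num [aexp_zero]
      rw [hz0, add_zero]
      rw [← Finset.sum_subset (Finset.range_subset_range.mpr (show K' ≤ K'+1+2 by omega))
        (fun x hx hnx => by
          have hxK : K' ≤ x := by simpa [Finset.mem_range, Nat.not_lt] using hnx
          rw [hγge ((x:ℤ)+1) (by push_cast; omega)]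
          ring)]
      apply Finset.sum_congr rfl
      intro m _
      have e1 : (m:ℤ)+1 = ((m+1:ℕ):ℤ) := by push_cast; ring
      rw [e1, hγnat]; ring
    have cS4 : ∑ m ∈ range (K+2),
        (if (m:ℤ)+1 = (b:ℤ)+1 then Aexp t1 ((a:ℤ)+2) else 0) * Aexp t2 ((m:ℤ)+1)
          = Aexp t1 ((a:ℤ)+2) * Aexp t2 ((b:ℤ)+1) := by
      rw [Finset.sum_eq_single b]
      · rw [if_pos rfl]
      · intro m _ hne
        rw [if_neg (by omega), zero_mul]
      · intro habs
        exact absurd (Finset.mem_range.mpr (by omega)) habs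
    have cS5 : ∑ m ∈ range (K+2),
        (if (m:ℤ)+1 = (a:ℤ)+2 then Aexp t1 ((b:ℤ)+1) else 0) * Aexp t2 ((m:ℤ)+1)
          = Aexp t1 ((b:ℤ)+1) * Aexp t2 ((a:ℤ)+2) := by
      rw [Finset.sum_eq_single (a+1)]
      · rw [if_pos (by push_cast; ring)]
        congr 1 <;> push_cast <;> ring
      · intro m _ hne
        rw [if_neg (by omega), zero_mul]
      · intro habs
        exact absurd (Finset.mem_range.mpr (by omega)) habs
    rw [cS1, cS2, cS3, cS4, cS5]
    have comb : ∑ c ∈ range K, γ c t1 * (Aexp t1 2 * Aexp t2 ((c:ℤ)+1))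
        - ∑ c ∈ range K, γ c t1 * (Aexp t1 1 * Aexp t2 ((c:ℤ)+2))
        - ∑ c ∈ range K, γ c t1 * (Aexp t1 1 * Aexp t2 (c:ℤ))
        = ∑ c ∈ range K, γ c t1 *
          (Aexp t1 2 * Aexp t2 ((c:ℤ)+1) - Aexp t1 1 * Aexp t2 ((c:ℤ)+2)
            - Aexp t1 1 * Aexp t2 (c:ℤ)) := by
      rw [← Finset.sum_sub_distrib, ← Finset.sum_sub_distrib]
      apply Finset.sum_congr rfl
      intro c _; ring
    rw [comb, ← hid', NumC2_expand]
    ring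
  -- extract coefficient equations
  have hE1 := indep (K+2) (fun m => E ((m:ℤ)+1)) hS
  have hEz : ∀ z : ℤ, 1 ≤ z → E z = 0 := by
    intro z hz
    by_cases hle : z ≤ (K:ℤ)+2
    · have hz1 : z = (((z-1).toNat : ℕ) : ℤ) + 1 := by omega
      rw [hz1]
      exact hE1 _ (by omega)
    · simp only [hE]
      rw [hγge (z-1) (by omega), hγge (z-2) (by omega), hγge z (by omega),
        if_neg (by omega), if_neg (by omega)]
      ring
  set H : ℤ → ℂ := fun z => Aexp t1 1 * γh z with hH
  have R : ∀ z : ℤ, 1 ≤ z → uu t1 * H (z-1) = H z + H (z-2)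
      + (if z = (b:ℤ)+1 then Aexp t1 ((a:ℤ)+2) else 0)
      - (if z = (a:ℤ)+2 then Aexp t1 ((b:ℤ)+1) else 0) := by
    intro z hz
    have h := hEz z hz
    simp only [hE] at h
    rw [aexp_two] at h
    simp only [hH]
    linear_combination h
  have hHge : ∀ z : ℤ, (K:ℤ) ≤ z → H z = 0 := by
    intro z hz; simp only [hH]; rw [hγge z hz]; ring
  have hZdown : ∀ j : ℕ, ∀ z : ℤ, (K:ℤ) - j ≤ z → (a:ℤ)+1 ≤ z → H z = 0 := by
    intro j
    induction j with
    | zero => intro z h1 _; exact hHge z (by omega)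
    | succ j ih =>
      intro z h1 h2
      by_cases hKz : (K:ℤ) ≤ z
      · exact hHge z hKz
      · have hr := R (z+2) (by omega)
        rw [if_neg (by omega), if_neg (by omega)] at hr
        have e1 : z+2-1 = z+1 := by ring
        have e2 : z+2-2 = z := by ring
        rw [e1, e2] at hr
        rw [ih (z+1) (by omega) (by omega), ih (z+2) (by omega) (by omega)] at hr
        linear_combination -hr
  have hZ : ∀ z : ℤ, (a:ℤ)+1 ≤ z → H z = 0 := by
    intro z hz
    exact hZdown K z (by omega) hz
  have hC2 : ∀ j : ℕ, j ≤ a - b → H ((a:ℤ) - j) = sc j t1 * Aexp t1 ((b:ℤ)+1) := by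
    intro j
    induction j using Nat.strong_induction_on with
    | _ j ih =>
      intro hj
      rcases j with _ | j
      · have hr := R ((a:ℤ)+2) (by omega)
        rw [if_neg (by omega), if_pos rfl] at hr
        have e1 : (a:ℤ)+2-1 = (a:ℤ)+1 := by ring
        have e2 : (a:ℤ)+2-2 = (a:ℤ) := by ring
        rw [e1, e2] at hr
        rw [hZ ((a:ℤ)+1) (by omega), hZ ((a:ℤ)+2) (by omega)] at hr
        have e3 : (a:ℤ) - ((0:ℕ):ℤ) = (a:ℤ) := by norm_num
        rw [e3, sc_zero, one_mul]
        linear_combination -hr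
      · have hr := R ((a:ℤ) - j + 1) (by omega)
        rw [if_neg (by omega), if_neg (by omega)] at hr
        have e1 : (a:ℤ) - j + 1 - 1 = (a:ℤ) - j := by ring
        have e2 : (a:ℤ) - j + 1 - 2 = (a:ℤ) - ((j+1:ℕ):ℤ) := by push_cast; ring
        rw [e1, e2] at hr
        rw [ih j (by omega) (by omega)] at hr
        rcases j with _ | j'
        · have e4 : (a:ℤ) - ((0:ℕ):ℤ) + 1 = (a:ℤ) + 1 := by norm_num
          rw [e4, hZ ((a:ℤ)+1) (by omega), sc_zero] at hr
          rw [show (0:ℕ)+1 = 1 from rfl, sc_one]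
          linear_combination -hr
        · have e4 : (a:ℤ) - ((j'+1:ℕ):ℤ) + 1 = (a:ℤ) - ((j':ℕ):ℤ) := by push_cast; ring
          rw [e4, ih j' (by omega) (by omega)] at hr
          have hsc := sc_rec t1 j'
          rw [show j'+1+1 = j'+2 from by omega]
          linear_combination Aexp t1 ((b:ℤ)+1) * hsc - hr
  have hH0 : H 0 = Aexp t1 1 * γ 0 t1 := by
    simp only [hH]
    rw [show (0:ℤ) = ((0:ℕ):ℤ) by norm_num, hγnat]
  by_cases hb : b = 0
  · subst hb
    have h0 := hC2 a (by omega)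
    have e1 : (a:ℤ) - (a:ℕ) = 0 := by omega
    rw [e1] at h0
    rw [← hH0, h0]
    have hsc := sc_mul_aexp_one a t1
    rw [show ((0:ℕ):ℤ)+1 = 1 by norm_num]
    rw [hsc]
    congr 1 <;> push_cast <;> ring
  · have hb1 : 1 ≤ b := by omega
    have hCb : H (b:ℤ) = sc (a-b) t1 * Aexp t1 ((b:ℤ)+1) := by
      have h1 := hC2 (a-b) (by omega)
      rw [show (a:ℤ) - ((a-b:ℕ):ℤ) = (b:ℤ) from by omega] at h1
      exact h1
    have hC3 : ∀ j : ℕ, j ≤ b - 1 → H ((b:ℤ) - 1 - j)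
        = sc (a-b+1+j) t1 * Aexp t1 ((b:ℤ)+1) - sc j t1 * Aexp t1 ((a:ℤ)+2) := by
      intro j
      induction j using Nat.strong_induction_on with
      | _ j ih =>
        intro hj
        rcases j with _ | j
        · have hr := R ((b:ℤ)+1) (by omega)
          rw [if_pos rfl, if_neg (by omega)] at hr
          have e1 : (b:ℤ)+1-1 = (b:ℤ) := by ring
          have e2 : (b:ℤ)+1-2 = (b:ℤ)-1-((0:ℕ):ℤ) := by push_cast; ring
          rw [e1, e2, hCb] at hr
          rw [show a-b+1+0 = a-b+1 from by omega, sc_zero]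
          by_cases hab : a = b
          · have h1 : H ((b:ℤ)+1) = 0 := hZ _ (by omega)
            rw [h1, show a-b = 0 from by omega, sc_zero] at hr
            rw [show a-b+1 = 1 from by omega, sc_one]
            linear_combination -hr
          · have h1 := hC2 (a-b-1) (by omega)
            rw [show (a:ℤ) - ((a-b-1:ℕ):ℤ) = (b:ℤ)+1 from by omega] at h1
            rw [h1] at hr
            have hsc := sc_rec t1 (a-b-1)
            rw [show a-b-1+1 = a-b from by omega, show a-b-1+2 = a-b+1 from by omega] at hsc
            linear_combination Aexp t1 ((b:ℤ)+1) * hsc - hr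
        · have hr := R ((b:ℤ) - j) (by omega)
          rw [if_neg (by omega), if_neg (by omega)] at hr
          have e1 : (b:ℤ)-j-1 = (b:ℤ)-1-((j:ℕ):ℤ) := by push_cast; ring
          have e2 : (b:ℤ)-j-2 = (b:ℤ)-1-((j+1:ℕ):ℤ) := by push_cast; ring
          rw [e1, e2] at hr
          rw [ih j (by omega) (by omega)] at hr
          rcases j with _ | j3
          · rw [show (b:ℤ) - ((0:ℕ):ℤ) = (b:ℤ) from by push_cast; ring, hCb] at hr
            have hsc := sc_rec t1 (a-b)
            rw [show a-b+1+0 = a-b+1 from by omega, sc_zero] at hr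
            rw [show a-b+1+(0+1) = a-b+2 from by omega, show (0:ℕ)+1 = 1 from rfl, sc_one]
            linear_combination Aexp t1 ((b:ℤ)+1) * hsc - hr
          · rw [show (b:ℤ) - ((j3+1:ℕ):ℤ) = (b:ℤ)-1-((j3:ℕ):ℤ) from by push_cast; ring,
              ih j3 (by omega) (by omega)] at hr
            have hsc1 := sc_rec t1 (a-b+j3+1)
            rw [show a-b+j3+1+1 = a-b+1+(j3+1) from by omega,
              show a-b+j3+1+2 = a-b+1+(j3+1+1) from by omega] at hsc1
            have hsc2 := sc_rec t1 j3
            have egoal1 : a-b+1+(j3+1) = a-b+j3+2 := by omega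
            have egoal2 : a-b+1+(j3+1+1) = a-b+j3+3 := by omega
            have egoal3 : a-b+1+j3 = a-b+j3+1 := by omega
            rw [egoal1, egoal2] at hsc1
            rw [egoal1, egoal3] at hr
            rw [show a-b+1+(j3+1+1) = a-b+j3+3 from by omega]
            linear_combination Aexp t1 ((b:ℤ)+1) * hsc1 - Aexp t1 ((a:ℤ)+2) * hsc2 - hr
    have hfin := hC3 (b-1) le_rfl
    rw [show (b:ℤ)-1-((b-1:ℕ):ℤ) = 0 from by omega] at hfin
    rw [show a-b+1+(b-1) = a from by omega] at hfin
    rw [← hH0, hfin]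
    exact fin_id t1 a b hb1 hba

theorem stmt6 (a b d : ℕ) (hba : b ≤ a) (M : ℕ → ℕ → ℕ)
    (hfin : (Function.support fun p : ℕ × ℕ => M p.1 p.2).Finite)
    (hM : ∀ t1 t2 : ℂˣ, NumC2 a b t1 t2 =
      NumC2 0 0 t1 t2 * ∑ᶠ p : ℕ × ℕ, (M p.1 p.2 : ℂ) * sc p.1 t1 * sc p.2 t2) :
    (M d 0 ≠ 0 ↔ ∃ k : ℕ, a = d + k ∧ b = k) ∧
    ((∃ k : ℕ, a = d + k ∧ b = k) → M d 0 = 1) := by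
  classical
  set K : ℕ := (hfin.toFinset.sup fun p => max p.1 p.2) + a + 4 with hKdef
  have hK : a + 3 ≤ K := by omega
  have hMK : ∀ y c : ℕ, K ≤ y ∨ K ≤ c → M y c = 0 := by
    intro y c hyc
    by_contra hne
    have hmem : (y, c) ∈ hfin.toFinset := by
      rw [Set.Finite.mem_toFinset]
      exact hne
    have hle := Finset.le_sup (f := fun p : ℕ × ℕ => max p.1 p.2) hmem
    simp only [max_le_iff] at hle
    omega
  set γ : ℕ → ℂˣ → ℂ := fun c t1 => ∑ y ∈ Finset.range K, (M y c : ℂ) * sc y t1 with hγ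
  have hγ0 : ∀ c, K ≤ c → ∀ t1, γ c t1 = 0 := by
    intro c hc t1
    simp only [hγ]
    apply Finset.sum_eq_zero
    intro y _
    rw [hMK y c (Or.inr hc)]
    simp
  have hid : ∀ t1 t2 : ℂˣ, NumC2 a b t1 t2
      = NumC2 0 0 t1 t2 * ∑ c ∈ Finset.range K, γ c t1 * sc c t2 := by
    intro t1 t2
    rw [hM t1 t2]
    congr 1
    rw [finsum_eq_finset_sum_of_support_subset _
      (s := Finset.range K ×ˢ Finset.range K) (by
        intro p hp
        simp only [Function.mem_support] at hp
        have hMp : M p.1 p.2 ≠ 0 := by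
          intro h0
          apply hp
          rw [h0]
          simp
        simp only [Finset.coe_product, Set.mem_prod, Finset.mem_coe, Finset.mem_range]
        constructor
        · by_contra hy; exact hMp (hMK _ _ (Or.inl (by omega)))
        · by_contra hc; exact hMp (hMK _ _ (Or.inr (by omega))))]
    rw [Finset.sum_product, Finset.sum_comm]
    apply Finset.sum_congr rfl
    intro c _
    simp only [hγ]
    rw [Finset.sum_mul]
  have key := main_aux a b K hba hK γ hγ0 hid
  set cc : ℕ → ℂ := fun y => (M y 0 : ℂ) - (if y = a - b then 1 else 0) with hcc
  have hsum0 : ∀ t1 : ℂˣ, ∑ y ∈ Finset.range K, cc y * Aexp t1 ((y:ℤ)+1) = 0 := by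
    intro t1
    have e1 : ∑ y ∈ Finset.range K, (M y 0 : ℂ) * Aexp t1 ((y:ℤ)+1)
        = Aexp t1 ((a:ℤ) - b + 1) := by
      rw [← key t1]
      simp only [hγ]
      rw [Finset.mul_sum]
      apply Finset.sum_congr rfl
      intro y _
      rw [← sc_mul_aexp_one y t1]
      ring
    have e2 : ∑ y ∈ Finset.range K, (if y = a - b then (1:ℂ) else 0) * Aexp t1 ((y:ℤ)+1)
        = Aexp t1 ((a:ℤ) - b + 1) := by
      rw [Finset.sum_eq_single (a-b)]
      · rw [if_pos rfl, one_mul]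
        congr 1
        omega
      · intro y _ hne
        rw [if_neg hne, zero_mul]
      · intro habs
        exact absurd (Finset.mem_range.mpr (by omega)) habs
    simp only [hcc, sub_mul]
    rw [Finset.sum_sub_distrib, e1, e2, sub_self]
  have hind := indep K cc hsum0
  have hval : ∀ y : ℕ, (M y 0 : ℂ) = if y = a - b then 1 else 0 := by
    intro y
    by_cases hy : y < K
    · have h0 := hind y hy
      simp only [hcc] at h0
      exact sub_eq_zero.mp h0
    · rw [hMK y 0 (Or.inl (by omega)), if_neg (by omega)]
      simp
  have hiff : M d 0 ≠ 0 ↔ d = a - b := by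
    constructor
    · intro hne
      by_contra hda
      have := hval d
      rw [if_neg hda] at this
      exact hne (by exact_mod_cast this)
    · intro hda
      have := hval d
      rw [if_pos hda] at this
      have h1 : M d 0 = 1 := by exact_mod_cast this
      omega
  constructor
  · rw [hiff]
    constructor
    · intro hda
      exact ⟨b, by omega, rfl⟩
    · rintro ⟨k, hk1, hk2⟩
      omega
  · rintro ⟨k, hk1, hk2⟩
    have hda : d = a - b := by omega
    have := hval d
    rw [if_pos hda] at this
    exact_mod_cast this
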